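/- Let A be a D × M complex matrix with A Aᴴ = I_D, and let q > 1. Then (1/(1-q)) · log((1/D^q) Σ_{i,j} |A_{ij}|^{2q}) ≥ log D. In other words, the Rényi-q decomposition entropy of the state with coefficients A_{ij}/√D is at least log D. -/

import Mathlib

open Matrix

/-- For a `D × M` complex matrix with `A * Aᴴ = 1` (`D ≥ 1`) and `q > 1`, the Rényi-`q`
decomposition entropy of the state with coefficients `A i j / √D` is at least `log D`:
`(1/(1-q)) · log ((1/D^q) ∑_{i,j} ‖A i j‖^(2q)) ≥ log D`. -/
theorem renyi_entropy_coisometry_ge_log {D M : ℕ} (hD : 1 ≤ D)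
    (A : Matrix (Fin D) (Fin M) ℂ) (hA : A * Aᴴ = 1) (q : ℝ) (hq : 1 < q) :
    (1 / (1 - q)) * Real.log ((1 / (D : ℝ) ^ q) * ∑ i, ∑ j, ‖A i j‖ ^ (2 * q)) ≥
      Real.log D := by
  have hDpos : (0:ℝ) < D := by exact_mod_cast hD
  -- row sums of squared norms equal 1
  have hrow : ∀ i, ∑ j, ‖A i j‖ ^ 2 = 1 := by
    intro i
    have h1 : (A * Aᴴ) i i = 1 := by rw [hA]; simp
    have h2 : (∑ j, (Complex.normSq (A i j) : ℂ)) = 1 := by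
      simpa [Matrix.mul_apply, Matrix.conjTranspose_apply, Complex.mul_conj] using h1
    have h3 : (∑ j, Complex.normSq (A i j)) = 1 := by exact_mod_cast h2
    calc ∑ j, ‖A i j‖ ^ 2 = ∑ j, Complex.normSq (A i j) :=
          Finset.sum_congr rfl fun j _ => by
            rw [Complex.sq_norm]
      _ = 1 := h3
  have hterm_nonneg : ∀ i j, (0:ℝ) ≤ ‖A i j‖ ^ (2*q) :=
    fun i j => Real.rpow_nonneg (norm_nonneg _) _
  -- each entry has norm ≤ 1
  have hle1 : ∀ i j, ‖A i j‖ ≤ 1 := by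
    intro i j
    have hsq : ‖A i j‖ ^ 2 ≤ 1 := by
      rw [← hrow i]
      exact Finset.single_le_sum (fun k _ => sq_nonneg ‖A i k‖) (Finset.mem_univ j)
    nlinarith [norm_nonneg (A i j)]
  -- rpow bound
  have hbd : ∀ i j, ‖A i j‖ ^ (2*q) ≤ ‖A i j‖ ^ 2 := by
    intro i j
    rcases eq_or_lt_of_le (norm_nonneg (A i j)) with h0 | hpos
    · rw [← h0, Real.zero_rpow (by positivity)]; positivity
    · have := Real.rpow_le_rpow_of_exponent_ge hpos (hle1 i j)
        (by linarith : (2:ℝ) ≤ 2*q)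
      calc ‖A i j‖ ^ (2*q) ≤ ‖A i j‖ ^ (2:ℝ) := this
        _ = ‖A i j‖ ^ 2 := by rw [Real.rpow_two]
  set S := ∑ i, ∑ j, ‖A i j‖ ^ (2*q) with hS
  have hSle : S ≤ D := by
    calc S ≤ ∑ i : Fin D, ∑ j, ‖A i j‖ ^ 2 := by
            apply Finset.sum_le_sum; intro i _
            exact Finset.sum_le_sum fun j _ => hbd i j
      _ = ∑ i : Fin D, (1:ℝ) := Finset.sum_congr rfl fun i _ => hrow i
      _ = D := by simp
  have hSpos : 0 < S := by
    have i0 : Fin D := ⟨0, hD⟩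
    have hj : ∃ j, A i0 j ≠ 0 := by
      by_contra h
      push_neg at h
      have := hrow i0
      simp [h] at this
    obtain ⟨j0, hj0⟩ := hj
    have h1 : 0 < ‖A i0 j0‖ ^ (2*q) :=
      Real.rpow_pos_of_pos (norm_pos_iff.mpr hj0) _
    have h2 : (0:ℝ) < ∑ j, ‖A i0 j‖ ^ (2*q) :=
      Finset.sum_pos' (fun j _ => hterm_nonneg i0 j) ⟨j0, Finset.mem_univ _, h1⟩
    exact Finset.sum_pos' (fun i _ => Finset.sum_nonneg fun j _ => hterm_nonneg i j)
      ⟨i0, Finset.mem_univ _, h2⟩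
  have hDq : (0:ℝ) < (D:ℝ) ^ q := Real.rpow_pos_of_pos hDpos _
  have hapos : 0 < (1 / (D:ℝ) ^ q) * S := by positivity
  have hale : (1 / (D:ℝ) ^ q) * S ≤ (D:ℝ) ^ (1 - q) := by
    have : (1 / (D:ℝ) ^ q) * S ≤ (1 / (D:ℝ) ^ q) * D := by
      apply mul_le_mul_of_nonneg_left hSle (by positivity)
    calc (1 / (D:ℝ) ^ q) * S ≤ (1 / (D:ℝ) ^ q) * D := this
      _ = (D:ℝ) ^ (1 - q) := by
          rw [Real.rpow_sub hDpos, Real.rpow_one]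
          field_simp
  have hlog : Real.log ((1 / (D:ℝ) ^ q) * S) ≤ (1 - q) * Real.log D := by
    calc Real.log ((1 / (D:ℝ) ^ q) * S) ≤ Real.log ((D:ℝ) ^ (1 - q)) :=
          Real.log_le_log hapos hale
      _ = (1 - q) * Real.log D := Real.log_rpow hDpos _
  have h1q : 1 - q < 0 := by linarith
  have hmul := mul_le_mul_of_nonpos_left hlog
    (by apply div_nonpos_of_nonneg_of_nonpos <;> linarith : 1 / (1 - q) ≤ 0)
  have heq : (1 / (1 - q)) * ((1 - q) * Real.log D) = Real.log D := by
    rw [one_div, ← mul_assoc, inv_mul_cancel₀ (by linarith : (1:ℝ) - q ≠ 0), one_mul]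
  rw [heq] at hmul
  exact hmul
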